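/- For every real λ > 1, ∫₀¹ ((1−u)/u)·ln(λ/(λ−u)) du = Li₂(1/λ) − (λ−1)·ln(1 − 1/λ) − 1. -/

import Mathlib

open MeasureTheory Real Set Filter

noncomputable def Li2 (x : ℝ) : ℝ := ∑' n : ℕ, x ^ (n + 1) / ((n : ℝ) + 1) ^ 2

theorem statement14 (lam : ℝ) (hlam : 1 < lam) :
    (∫ u in (0 : ℝ)..1, ((1 - u) / u) * Real.log (lam / (lam - u))) =
      Li2 (1 / lam) - (lam - 1) * Real.log (1 - 1 / lam) - 1 := by
  have hlam0 : (0:ℝ) < lam := lt_trans one_pos hlam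
  -- Part A: the dilogarithm integral
  have partA : (∫ u in Ioc (0:ℝ) 1, (-Real.log (1 - u / lam)) / u) = Li2 (1/lam) := by
    set F : ℕ → ℝ → ℝ := fun n u => u ^ n * ((1/lam) ^ (n+1) / ((n:ℝ)+1)) with hF
    have hc_nonneg : ∀ n : ℕ, (0:ℝ) ≤ (1/lam) ^ (n+1) / ((n:ℝ)+1) := fun n =>
      div_nonneg (pow_nonneg (by positivity) _) (by positivity)
    have hFint : ∀ n, IntegrableOn (F n) (Ioc (0:ℝ) 1) := fun n =>
      ((continuous_pow n).mul continuous_const).integrableOn_Ioc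
    have hIval : ∀ n : ℕ, (∫ u in Ioc (0:ℝ) 1, F n u) = (1/lam) ^ (n+1) / ((n:ℝ)+1) ^ 2 := by
      intro n
      rw [← intervalIntegral.integral_of_le (zero_le_one), intervalIntegral.integral_mul_const,
        integral_pow]
      have h1 : ((n:ℝ)+1) ≠ 0 := by positivity
      field_simp
      ring
    have hnorm : ∀ n : ℕ, (∫ u in Ioc (0:ℝ) 1, ‖F n u‖) = (1/lam) ^ (n+1) / ((n:ℝ)+1) ^ 2 := by
      intro n
      rw [← hIval n]
      apply setIntegral_congr_fun measurableSet_Ioc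
      intro u hu
      exact abs_of_nonneg (mul_nonneg (pow_nonneg (le_of_lt hu.1) _) (hc_nonneg n))
    have hsum : Summable fun n : ℕ => ∫ u in Ioc (0:ℝ) 1, ‖F n u‖ := by
      apply Summable.of_nonneg_of_le (fun n => integral_nonneg fun u => norm_nonneg _)
        (fun n => ?_) (summable_geometric_of_lt_one (by positivity) (by
          rw [div_lt_one hlam0]; exact hlam) : Summable fun n : ℕ => (1/lam)^n)
      rw [hnorm n]
      calc (1/lam) ^ (n+1) / ((n:ℝ)+1) ^ 2 ≤ (1/lam) ^ (n+1) / 1 := by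
            apply div_le_div_of_nonneg_left (pow_nonneg (by positivity) _) one_pos
            nlinarith [Nat.cast_nonneg (α := ℝ) n]
        _ ≤ (1/lam) ^ n := by
            rw [div_one, pow_succ]
            have h1 : (1/lam) ≤ 1 := by
              rw [div_le_one hlam0]; linarith
            nlinarith [pow_nonneg (le_of_lt (by positivity : (0:ℝ) < 1/lam)) n]
    have key := integral_tsum_of_summable_integral_norm (fun n => hFint n) hsum
    have heq : ∀ u ∈ Ioc (0:ℝ) 1, (∑' n, F n u) = (-Real.log (1 - u / lam)) / u := by
      intro u hu
      have hx : |u / lam| < 1 := by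
        rw [abs_of_nonneg (div_nonneg (le_of_lt hu.1) (le_of_lt hlam0)), div_lt_one hlam0]
        exact lt_of_le_of_lt hu.2 hlam
      have hs := (hasSum_pow_div_log_of_abs_lt_one hx).div_const u
      have : (fun n : ℕ => (u / lam) ^ (n+1) / ((n:ℝ)+1) / u) = fun n => F n u := by
        funext n
        have hu0 : u ≠ 0 := ne_of_gt hu.1
        simp only [hF, div_pow]
        field_simp
        ring
      rw [this] at hs
      exact hs.tsum_eq
    rw [setIntegral_congr_fun measurableSet_Ioc (fun u hu => (heq u hu).symm), ← key]
    exact tsum_congr hIval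
  -- Part B: the elementary integral
  have partB : (∫ u in (0:ℝ)..1, Real.log (1 - u / lam)) = (1 - lam) * Real.log (1 - 1/lam) - 1 := by
    have hcont : ContinuousOn (fun u : ℝ => Real.log (1 - u / lam)) (Icc 0 1) := by
      apply ContinuousOn.log
      · exact continuousOn_const.sub (continuousOn_id.div_const lam)
      · intro x hx
        have : x / lam < 1 := by
          rw [div_lt_one hlam0]; exact lt_of_le_of_lt hx.2 hlam
        nlinarith
    have hderiv : ∀ u ∈ Icc (0:ℝ) 1,
        HasDerivAt (fun u : ℝ => (u - lam) * Real.log (1 - u / lam) - u)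
          (Real.log (1 - u / lam)) u := by
      intro u hu
      have hpos : (0:ℝ) < 1 - u / lam := by
        have : u / lam < 1 := by rw [div_lt_one hlam0]; exact lt_of_le_of_lt hu.2 hlam
        linarith
      have h1 : HasDerivAt (fun u : ℝ => 1 - u / lam) (-(1/lam)) u := by
        simpa using ((hasDerivAt_id u).div_const lam).const_sub 1
      have h2 := h1.log (ne_of_gt hpos)
      have h3 := (((hasDerivAt_id u).sub_const lam).mul h2).sub (hasDerivAt_id u)
      refine HasDerivAt.congr_deriv h3 ?_
      have hne : lam - u ≠ 0 := by
        have : u < lam := lt_of_le_of_lt hu.2 hlam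
        linarith
      field_simp
      simp only [id]; ring
    rw [intervalIntegral.integral_eq_sub_of_hasDerivAt (fun u hu => hderiv u (by simpa using hu))
        (hcont.intervalIntegrable_of_Icc zero_le_one)]
    simp [Real.log_one]
  -- integrability of the singular piece
  have hf1cont : ContinuousOn (fun u : ℝ => (-Real.log (1 - u / lam)) / u) (Ioc (0:ℝ) 1) := by
    apply ContinuousOn.div
    · apply ContinuousOn.neg
      apply ContinuousOn.log
      · exact continuousOn_const.sub (continuousOn_id.div_const lam)
      · intro x hx
        have : x / lam < 1 := by
          rw [div_lt_one hlam0]; exact lt_of_le_of_lt hx.2 hlam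
        nlinarith
    · exact continuousOn_id
    · exact fun x hx => ne_of_gt hx.1
  have hf1int : IntegrableOn (fun u : ℝ => (-Real.log (1 - u / lam)) / u) (Ioc (0:ℝ) 1) := by
    apply Integrable.mono' (g := fun _ : ℝ => 1/(lam-1))
      (integrableOn_const (measure_Ioc_lt_top).ne)
      (hf1cont.aestronglyMeasurable measurableSet_Ioc)
    filter_upwards [ae_restrict_mem measurableSet_Ioc] with u hu
    have hu0 : 0 < u := hu.1
    have hu1 : u ≤ 1 := hu.2
    have hul : u < lam := lt_of_le_of_lt hu1 hlam
    have hpos : (0:ℝ) < 1 - u / lam := by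
      have : u / lam < 1 := by rw [div_lt_one hlam0]; exact hul
      linarith
    have hlog_nonneg : 0 ≤ -Real.log (1 - u / lam) := by
      rw [neg_nonneg]
      apply Real.log_nonpos (le_of_lt hpos)
      have : 0 ≤ u / lam := div_nonneg (le_of_lt hu0) (le_of_lt hlam0)
      linarith
    have hbound : -Real.log (1 - u / lam) ≤ u / (lam - 1) := by
      have h1 : Real.log ((1 - u/lam)⁻¹) ≤ (1 - u/lam)⁻¹ - 1 :=
        Real.log_le_sub_one_of_pos (inv_pos.2 hpos)
      rw [Real.log_inv] at h1
      have h2 : (1 - u/lam)⁻¹ - 1 = u / (lam - u) := by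
        have hne : lam - u ≠ 0 := by linarith
        have h0 : 1 - u/lam = (lam - u)/lam := by field_simp
        rw [h0]
        rw [inv_div]
        field_simp
        ring
      have h4 : u / (lam - u) ≤ u / (lam - 1) := by
        apply div_le_div_of_nonneg_left (le_of_lt hu0) (by linarith)
        linarith
      linarith
    rw [Real.norm_eq_abs, abs_of_nonneg (div_nonneg hlog_nonneg (le_of_lt hu0)),
      div_le_iff₀ hu0]
    have : u / (lam - 1) = 1/(lam-1) * u := by ring
    linarith [this ▸ hbound]
  have hf2int : IntegrableOn (fun u : ℝ => Real.log (1 - u / lam)) (Ioc (0:ℝ) 1) := by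
    have hcont : ContinuousOn (fun u : ℝ => Real.log (1 - u / lam)) (Icc 0 1) := by
      apply ContinuousOn.log
      · exact continuousOn_const.sub (continuousOn_id.div_const lam)
      · intro x hx
        have : x / lam < 1 := by
          rw [div_lt_one hlam0]; exact lt_of_le_of_lt hx.2 hlam
        nlinarith
    exact (hcont.integrableOn_Icc).mono_set Ioc_subset_Icc_self
  -- main computation
  rw [intervalIntegral.integral_of_le zero_le_one]
  have hsplit : ∀ u ∈ Ioc (0:ℝ) 1,
      ((1 - u) / u) * Real.log (lam / (lam - u)) =
        (-Real.log (1 - u / lam)) / u + Real.log (1 - u / lam) := by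
    intro u hu
    have hu0 : u ≠ 0 := ne_of_gt hu.1
    have hul : (0:ℝ) < lam - u := by linarith [lt_of_le_of_lt hu.2 hlam]
    have h1 : Real.log (lam / (lam - u)) = -Real.log (1 - u / lam) := by
      rw [← Real.log_inv]
      congr 1
      field_simp
    rw [h1]
    field_simp
    ring
  rw [setIntegral_congr_fun measurableSet_Ioc hsplit, integral_add hf1int hf2int, partA,
    ← intervalIntegral.integral_of_le zero_le_one, partB]
  ring
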